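/- Consider an instance of P_m||C_max with m ≥ 3 machines and exactly n = 2m + 1 jobs with processing times p_1 ≥ p_2 ≥ … ≥ p_n ≥ 0. Suppose the LPT schedule assigns, for each i = 1,…,m, jobs i and 2m+1−i to machine M_i and then assigns the critical job 2m+1 to a machine of minimal load, and suppose p_{2m+1} < p_1 − p_m. Then C^LPT ≤ (15/13) · C* if m = 3, and C^LPT ≤ (4/3 − 1/(2m−1)) · C* if m ≥ 4. -/

import Mathlib

open Finset

/-- Load of machine `i` under schedule `σ` with processing times `p`. -/
def mload {m n : ℕ} (p : Fin n → ℝ) (σ : Fin n → Fin m) (i : Fin m) : ℝ :=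
  ∑ j ∈ Finset.univ.filter (fun j => σ j = i), p j

/-- Makespan of a schedule: the maximum machine load. -/
noncomputable def makespan {m n : ℕ} (p : Fin n → ℝ) (σ : Fin n → Fin m) : ℝ :=
  ⨆ i : Fin m, mload p σ i

/-- Optimal makespan `C*`: minimum makespan over all schedules on `m` machines. -/
noncomputable def optMakespan (m : ℕ) {n : ℕ} (p : Fin n → ℝ) : ℝ :=
  ⨅ σ : Fin n → Fin m, makespan p σ

/-- Processing times are sorted non-increasingly and are nonnegative. -/
def SortedNonneg {n : ℕ} (p : Fin n → ℝ) : Prop :=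
  (∀ i j : Fin n, i ≤ j → p j ≤ p i) ∧ ∀ j, 0 ≤ p j

/-- Load of machine `i` just before job `j` is assigned, when all jobs of `T`
are placed first and the remaining jobs are assigned in index order:
it counts all jobs of `T` on machine `i` plus all jobs of index `< j` on machine `i`. -/
def prefLoad {m n : ℕ} (p : Fin n → ℝ) (σ : Fin n → Fin m) (T : Finset (Fin n))
    (j : Fin n) (i : Fin m) : ℝ :=
  ∑ j' ∈ Finset.univ.filter (fun j' => (j' ∈ T ∨ j' < j) ∧ σ j' = i), p j'

/-- `σ` is a list schedule obtained by first placing all jobs of `T` together on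
one machine and then assigning the remaining jobs in index order (i.e. in
non-increasing order of processing time, for sorted `p`), each to a machine of
minimal current load. -/
def IsLSAfter {m n : ℕ} (p : Fin n → ℝ) (T : Finset (Fin n)) (σ : Fin n → Fin m) : Prop :=
  (∀ j ∈ T, ∀ j' ∈ T, σ j = σ j') ∧
  ∀ j, j ∉ T → ∀ i, prefLoad p σ T j (σ j) ≤ prefLoad p σ T j i

/-- `σ` is an LPT schedule: jobs assigned in order `1,…,n`, each to a machine of
minimal current load. -/
def IsLPT {m n : ℕ} (p : Fin n → ℝ) (σ : Fin n → Fin m) : Prop :=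
  IsLSAfter p ∅ σ

/-- `j'` is the critical job of schedule `σ`: it is assigned to a critical machine
(one whose load equals the makespan), and it is the largest-indexed job assigned
to a critical machine. -/
def IsCriticalJob {m n : ℕ} (p : Fin n → ℝ) (σ : Fin n → Fin m) (j' : Fin n) : Prop :=
  mload p σ (σ j') = makespan p σ ∧
  ∀ j : Fin n, mload p σ (σ j) = makespan p σ → j ≤ j'

/-- The (1-based) position of job `j'` on its machine: the number of jobs of index
`≤ j'` assigned to the same machine as `j'`. -/
def posOn {m n : ℕ} (σ : Fin n → Fin m) (j' : Fin n) : ℕ :=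
  (Finset.univ.filter (fun t => σ t = σ j' ∧ t ≤ j')).card

/-- The tuple of the `k` consecutive jobs `j'-k+1, …, j'` (in 1-based terms). -/
def tupleSet {n : ℕ} (j' : Fin n) (k : ℕ) : Finset (Fin n) :=
  Finset.univ.filter (fun t => t ≤ j' ∧ j'.val < t.val + k)

/-- An LPT′ schedule for critical job `j'`: job `j'` is placed alone on a machine
first, then the remaining jobs are assigned in index order, each to a machine of
minimal current load. -/
def IsLPTprime {m n : ℕ} (p : Fin n → ℝ) (j' : Fin n) (σ' : Fin n → Fin m) : Prop :=
  IsLSAfter p {j'} σ'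

/-- An LPT″ schedule for critical job `j'` in position `k`: jobs `j'-k+1,…,j'` are
placed together on one machine first, then the remaining jobs are assigned in
non-increasing order of processing time, each to a machine of minimal current load. -/
def IsLPTsec {m n : ℕ} (p : Fin n → ℝ) (j' : Fin n) (k : ℕ) (σ'' : Fin n → Fin m) : Prop :=
  IsLSAfter p (tupleSet j' k) σ''

lemma sum_mload {m n : ℕ} (p : Fin n → ℝ) (σ : Fin n → Fin m) :
    ∑ i, mload p σ i = ∑ j, p j := by
  simpa [mload] using Finset.sum_fiberwise (univ : Finset (Fin n)) σ p

lemma mload_le_makespan {m n : ℕ} (p : Fin n → ℝ) (σ : Fin n → Fin m) (i : Fin m) :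
    mload p σ i ≤ makespan p σ :=
  le_ciSup (Set.Finite.bddAbove (Set.finite_range _)) i

lemma sum_le_m_makespan {m n : ℕ} (p : Fin n → ℝ) (σ : Fin n → Fin m) :
    ∑ j, p j ≤ m * makespan p σ := by
  rw [← sum_mload p σ]
  calc ∑ i, mload p σ i ≤ ∑ _i : Fin m, makespan p σ :=
        Finset.sum_le_sum fun i _ => mload_le_makespan p σ i
    _ = m * makespan p σ := by simp [mul_comm]

lemma exists_three {m : ℕ} (σ : Fin (2*m+1) → Fin m) :
    ∃ i : Fin m, 3 ≤ (univ.filter fun j => σ j = i).card := by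
  by_contra h
  push_neg at h
  have hcard : (univ : Finset (Fin (2*m+1))).card
      = ∑ i : Fin m, (univ.filter fun j => σ j = i).card :=
    Finset.card_eq_sum_card_fiberwise (fun x _ => mem_univ _)
  have h2 : ∑ i : Fin m, (univ.filter fun j => σ j = i).card ≤ ∑ _i : Fin m, 2 :=
    Finset.sum_le_sum fun i _ => by have := h i; omega
  simp only [Finset.sum_const, Finset.card_univ, Fintype.card_fin, smul_eq_mul] at h2
  simp only [Finset.card_univ, Fintype.card_fin] at hcard
  omega

lemma triple_core {m : ℕ} (hm : 3 ≤ m) (p : Fin (2*m+1) → ℝ)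
    (hs : ∀ i j : Fin (2*m+1), i ≤ j → p j ≤ p i)
    {a b c : Fin (2*m+1)} (hab : a < b) (hbc : b < c) :
    p ⟨2*m-2, by omega⟩ + p ⟨2*m-1, by omega⟩ + p ⟨2*m, Nat.lt_succ_self _⟩ ≤ p a + p b + p c := by
  have hc := c.isLt
  have h1 : a.val < b.val := hab
  have h2 : b.val < c.val := hbc
  have ha' : p ⟨2*m-2, by omega⟩ ≤ p a := hs a ⟨2*m-2, by omega⟩ (by simp [Fin.le_def]; omega)
  have hb' : p ⟨2*m-1, by omega⟩ ≤ p b := hs b ⟨2*m-1, by omega⟩ (by simp [Fin.le_def]; omega)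
  have hc' : p ⟨2*m, Nat.lt_succ_self _⟩ ≤ p c := hs c ⟨2*m, Nat.lt_succ_self _⟩ (by simp [Fin.le_def]; omega)
  linarith

lemma triple_unordered {m : ℕ} (hm : 3 ≤ m) (p : Fin (2*m+1) → ℝ)
    (hs : ∀ i j : Fin (2*m+1), i ≤ j → p j ≤ p i)
    {a b c : Fin (2*m+1)} (hab : a ≠ b) (hac : a ≠ c) (hbc : b ≠ c) :
    p ⟨2*m-2, by omega⟩ + p ⟨2*m-1, by omega⟩ + p ⟨2*m, Nat.lt_succ_self _⟩ ≤ p a + p b + p c := by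
  rcases lt_trichotomy a b with h | h | h
  · rcases lt_trichotomy b c with h' | h' | h'
    · linarith [triple_core hm p hs h h']
    · exact absurd h' hbc
    · rcases lt_trichotomy a c with h'' | h'' | h''
      · linarith [triple_core hm p hs h'' h']
      · exact absurd h'' hac
      · linarith [triple_core hm p hs h'' h]
  · exact absurd h hab
  · rcases lt_trichotomy a c with h' | h' | h'
    · linarith [triple_core hm p hs h h']
    · exact absurd h' hac
    · rcases lt_trichotomy b c with h'' | h'' | h''
      · linarith [triple_core hm p hs h'' h']
      · exact absurd h'' hbc
      · linarith [triple_core hm p hs h'' h]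

lemma opt_triple_bound {m : ℕ} (hm : 3 ≤ m) (p : Fin (2*m+1) → ℝ) (hp : SortedNonneg p)
    (σ : Fin (2*m+1) → Fin m) :
    p ⟨2*m-2, by omega⟩ + p ⟨2*m-1, by omega⟩ + p ⟨2*m, Nat.lt_succ_self _⟩ ≤ makespan p σ := by
  obtain ⟨i, hi⟩ := exists_three σ
  obtain ⟨s, hsub, hscard⟩ := Finset.exists_subset_card_eq hi
  obtain ⟨a, b, c, hab, hac, hbc, rfl⟩ := Finset.card_eq_three.mp hscard
  have h1 : p a + p b + p c ≤ mload p σ i := by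
    have h2 : ∑ j ∈ ({a, b, c} : Finset (Fin (2*m+1))), p j ≤ mload p σ i :=
      Finset.sum_le_sum_of_subset_of_nonneg hsub (fun j _ _ => hp.2 j)
    rw [Finset.sum_insert (by simp [hab, hac]), Finset.sum_pair hbc] at h2
    linarith
  calc p ⟨2*m-2, by omega⟩ + p ⟨2*m-1, by omega⟩ + p ⟨2*m, Nat.lt_succ_self _⟩
      ≤ p a + p b + p c := triple_unordered hm p hp.1 hab hac hbc
    _ ≤ mload p σ i := h1
    _ ≤ makespan p σ := mload_le_makespan p σ i


/-- Proposition 13: for `n = 2m+1`, if the LPT schedule pairs job `i`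
with job `2m+1−i` on machine `M_i` (distinct machines) and then assigns the critical
job `2m+1` to a machine of minimal load, and `p_{2m+1} < p_1 − p_m`, then
`C^LPT ≤ (15/13)·C*` for `m = 3` and `C^LPT ≤ (4/3 − 1/(2m−1))·C*` for `m ≥ 4`. -/
theorem stmt10 {m : ℕ} (hm : 3 ≤ m)
    (p : Fin (2 * m + 1) → ℝ) (hp : SortedNonneg p)
    (σ : Fin (2 * m + 1) → Fin m) (hσ : IsLPT p σ)
    (hpair : ∀ t : Fin m, σ ⟨t.val, by have := t.isLt; omega⟩ =
      σ ⟨2 * m - 1 - t.val, by omega⟩)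
    (hinj : Function.Injective (fun t : Fin m =>
      σ ⟨t.val, by have := t.isLt; omega⟩))
    (hcrit : IsCriticalJob p σ ⟨2 * m, by omega⟩)
    (h1 : p ⟨2 * m, by omega⟩ < p ⟨0, by omega⟩ - p ⟨m - 1, by omega⟩) :
    (m = 3 → makespan p σ ≤ (15 / 13) * optMakespan m p) ∧
    (4 ≤ m → makespan p σ ≤ (4 / 3 - 1 / (2 * (m : ℝ) - 1)) * optMakespan m p) := by
  have hm0 : 0 < m := by omega
  obtain ⟨hsort, hnn⟩ := hp
  set jN : Fin (2*m+1) := ⟨2*m, by omega⟩ with hjN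
  set f : Fin m → Fin m := fun t => σ ⟨t.val, by have := t.isLt; omega⟩ with hf
  have hinj' : Function.Injective f := hinj
  have hsurj : Function.Surjective f := Finite.injective_iff_surjective.mp hinj'
  set J1 : Fin m → Fin (2*m+1) := fun t => ⟨t.val, by have := t.isLt; omega⟩ with hJ1
  set J2 : Fin m → Fin (2*m+1) := fun t => ⟨2*m-1-t.val, by omega⟩ with hJ2
  have hidx : ∀ (v w : ℕ) (h1 : v < 2*m+1) (h2 : w < 2*m+1), v = w →
      p ⟨v, h1⟩ = p ⟨w, h2⟩ := fun v w h1 h2 h => by subst h; rfl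
  have hstep1 : ∀ t : Fin m, σ (J1 t) = f t := fun t => rfl
  have hstep2 : ∀ t : Fin m, σ (J2 t) = f t := fun t => (hpair t).symm
  have hclass : ∀ (j : Fin (2*m+1)) (t : Fin m), j.val < 2*m →
      (σ j = f t ↔ (j = J1 t ∨ j = J2 t)) := by
    intro j t hlt
    constructor
    · intro hσj
      by_cases hjm : j.val < m
      · left
        have h1 : f ⟨j.val, hjm⟩ = f t := by
          rw [← hσj]
        have h2 := hinj' h1
        exact Fin.ext (by simpa [hJ1, Fin.ext_iff] using congrArg Fin.val h2)
      · right
        have htv : 2*m-1-j.val < m := by omega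
        have h1 : f ⟨2*m-1-j.val, htv⟩ = f t := by
          rw [← hσj, ← hstep2 ⟨2*m-1-j.val, htv⟩]
          exact congrArg σ (Fin.ext (by simp only [hJ2]; omega))
        have h2 := hinj' h1
        have hv : 2*m-1-j.val = t.val := by simpa [Fin.ext_iff] using congrArg Fin.val h2
        exact Fin.ext (by simp [hJ2]; omega)
    · rintro (rfl | rfl)
      · exact hstep1 t
      · exact hstep2 t
  have hJ12ne : ∀ t : Fin m, J1 t ≠ J2 t := by
    intro t
    have := t.isLt
    simp only [hJ1, hJ2, Fin.ne_iff_vne]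
    omega
  have hJ1N : ∀ t : Fin m, J1 t ≠ jN := by
    intro t; have := t.isLt; simp only [hJ1, hjN, Fin.ne_iff_vne]; omega
  have hJ2N : ∀ t : Fin m, J2 t ≠ jN := by
    intro t; have := t.isLt; simp only [hJ2, hjN, Fin.ne_iff_vne]; omega
  have hpre : ∀ t : Fin m,
      (univ.filter fun j' => ((j' ∈ (∅ : Finset (Fin (2*m+1)))) ∨ j' < jN) ∧ σ j' = f t)
        = {J1 t, J2 t} := by
    intro t
    ext j
    simp only [mem_filter, mem_univ, true_and, Finset.notMem_empty, false_or,
      mem_insert, mem_singleton]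
    constructor
    · rintro ⟨hlt, hσj⟩
      exact (hclass j t (by simpa [hjN, Fin.lt_def] using hlt)).mp hσj
    · rintro (rfl | rfl)
      · refine ⟨?_, hstep1 t⟩
        have := t.isLt
        simp only [hJ1, hjN, Fin.lt_def]; omega
      · refine ⟨?_, hstep2 t⟩
        have := t.isLt
        simp only [hJ2, hjN, Fin.lt_def]; omega
  have hprefval : ∀ t : Fin m, prefLoad p σ ∅ jN (f t) = p (J1 t) + p (J2 t) := by
    intro t
    unfold prefLoad
    rw [hpre t, Finset.sum_pair (hJ12ne t)]
  have hfilter : ∀ t : Fin m, (univ.filter fun j => σ j = f t)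
      = if σ jN = f t then {J1 t, J2 t, jN} else {J1 t, J2 t} := by
    intro t
    split_ifs with hN
    · ext j
      simp only [mem_filter, mem_univ, true_and, mem_insert, mem_singleton]
      constructor
      · intro hσj
        rcases Nat.lt_or_ge j.val (2*m) with h | h
        · rcases (hclass j t h).mp hσj with h' | h'
          · exact Or.inl h'
          · exact Or.inr (Or.inl h')
        · have : j = jN := Fin.ext (by have := j.isLt; simp only [hjN]; omega)
          exact Or.inr (Or.inr this)
      · rintro (rfl | rfl | rfl)
        exacts [hstep1 t, hstep2 t, hN]
    · ext j
      simp only [mem_filter, mem_univ, true_and, mem_insert, mem_singleton]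
      constructor
      · intro hσj
        rcases Nat.lt_or_ge j.val (2*m) with h | h
        · exact (hclass j t h).mp hσj
        · exfalso
          have : j = jN := Fin.ext (by have := j.isLt; simp only [hjN]; omega)
          rw [this] at hσj
          exact hN hσj
      · rintro (rfl | rfl)
        exacts [hstep1 t, hstep2 t]
  have hmload : ∀ t : Fin m, mload p σ (f t)
      = p (J1 t) + p (J2 t) + (if σ jN = f t then p jN else 0) := by
    intro t
    unfold mload
    rw [hfilter t]
    split_ifs with hN
    · rw [Finset.sum_insert (by simp [hJ12ne t, hJ1N t]),
        Finset.sum_pair (hJ2N t)]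
      ring
    · rw [Finset.sum_pair (hJ12ne t)]
      ring
  obtain ⟨t0, ht0⟩ := hsurj (σ jN)
  set q : ℝ := p jN with hq
  set C : ℝ := p (J1 t0) + p (J2 t0) with hC
  set S : ℝ := ∑ j, p j with hS
  have hCle : ∀ t : Fin m, C ≤ p (J1 t) + p (J2 t) := by
    intro t
    have h := hσ.2 jN (by simp) (f t)
    rw [hprefval t, ← ht0, hprefval t0] at h
    exact h
  have hmak : makespan p σ = C + q := by
    have h2 : mload p σ (σ jN) = makespan p σ := hcrit.1
    rw [← h2, ← ht0, hmload t0, if_pos ht0.symm]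
  have hSsum : ∑ t : Fin m, (p (J1 t) + p (J2 t)) = S - q := by
    have h1 : S = ∑ i : Fin m, mload p σ i := (sum_mload p σ).symm
    have h2 : ∑ i : Fin m, mload p σ i = ∑ t : Fin m, mload p σ (f t) :=
      (Fintype.sum_bijective f ⟨hinj', hsurj⟩ _ _ (fun t => rfl)).symm
    have h4 : ∑ t : Fin m, (if σ jN = f t then p jN else 0) = q := by
      have h5 : ∀ t : Fin m, (if σ jN = f t then p jN else 0)
          = if t = t0 then p jN else 0 := by
        intro t
        have hiff : (σ jN = f t) ↔ (t = t0) := by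
          rw [← ht0]
          constructor
          · intro hh; exact (hinj' hh).symm
          · intro hh; rw [hh]
        exact if_congr hiff rfl rfl
      rw [Finset.sum_congr rfl (fun t _ => h5 t)]
      simp [hq]
    have h3 : ∑ t : Fin m, mload p σ (f t)
        = (∑ t : Fin m, (p (J1 t) + p (J2 t))) + q := by
      rw [Finset.sum_congr rfl (fun t _ => hmload t), Finset.sum_add_distrib, h4]
    rw [h2, h3] at h1
    linarith
  have hmCle : (m : ℝ) * C ≤ S - q := by
    have h := Finset.card_nsmul_le_sum univ (fun t => p (J1 t) + p (J2 t)) C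
      (fun t _ => hCle t)
    rw [Finset.card_univ, Fintype.card_fin, nsmul_eq_mul, hSsum] at h
    exact h
  have hSM : S ≤ (m : ℝ) * optMakespan m p := by
    have hmpos : (0:ℝ) < m := by exact_mod_cast hm0
    have h : ∀ σ' : Fin (2*m+1) → Fin m, S / m ≤ makespan p σ' := by
      intro σ'
      rw [div_le_iff₀ hmpos]
      have := sum_le_m_makespan p σ'
      rw [← hS] at this
      linarith
    haveI : Nonempty (Fin (2*m+1) → Fin m) := ⟨fun _ => ⟨0, hm0⟩⟩
    have h2 : S / m ≤ optMakespan m p := le_ciInf h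
    rw [div_le_iff₀ hmpos] at h2
    linarith
  haveI hne : Nonempty (Fin (2*m+1) → Fin m) := ⟨fun _ => ⟨0, hm0⟩⟩
  set M : ℝ := optMakespan m p with hM
  have htripleM : p ⟨2*m-2, by omega⟩ + p ⟨2*m-1, by omega⟩ + q ≤ M :=
    le_ciInf (fun σ' => opt_triple_bound hm p ⟨hsort, hnn⟩ σ')
  have hb : p ⟨m, by omega⟩ ≤ p ⟨m-1, by omega⟩ :=
    hsort ⟨m-1, by omega⟩ ⟨m, by omega⟩ (by simp only [Fin.mk_le_mk]; omega)
  have he : p ⟨2*m-1, by omega⟩ ≤ p ⟨2*m-2, by omega⟩ :=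
    hsort ⟨2*m-2, by omega⟩ ⟨2*m-1, by omega⟩ (by simp only [Fin.mk_le_mk]; omega)
  have hqe1 : q ≤ p ⟨2*m-1, by omega⟩ :=
    hsort ⟨2*m-1, by omega⟩ jN (by simp only [hjN, Fin.mk_le_mk]; omega)
  have hCb : C ≤ p ⟨m-1, by omega⟩ + p ⟨m, by omega⟩ := by
    have h := hCle ⟨m-1, by omega⟩
    have e1 : p (J1 (⟨m-1, by omega⟩ : Fin m)) = p ⟨m-1, by omega⟩ :=
      hidx _ _ _ _ rfl
    have e2 : p (J2 (⟨m-1, by omega⟩ : Fin m)) = p ⟨m, by omega⟩ :=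
      hidx _ _ _ _ (by simp; omega)
    rw [e1, e2] at h
    exact h
  have hpart : ((m:ℝ) - 1) * C ≤ (S - q) - (p ⟨0, by omega⟩ + p ⟨2*m-1, by omega⟩) := by
    have h := Finset.card_nsmul_le_sum (univ.erase (⟨0, hm0⟩ : Fin m))
      (fun t => p (J1 t) + p (J2 t)) C (fun t _ => hCle t)
    rw [Finset.card_erase_of_mem (mem_univ _), Finset.card_univ, Fintype.card_fin] at h
    have he2 : ∑ t ∈ univ.erase (⟨0, hm0⟩ : Fin m), (p (J1 t) + p (J2 t))
        = (S - q) - (p (J1 (⟨0, hm0⟩ : Fin m)) + p (J2 (⟨0, hm0⟩ : Fin m))) := by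
      rw [Finset.sum_erase_eq_sub (mem_univ _), hSsum]
    rw [he2] at h
    have ea : p (J1 (⟨0, hm0⟩ : Fin m)) = p ⟨0, by omega⟩ := hidx _ _ _ _ rfl
    have eb : p (J2 (⟨0, hm0⟩ : Fin m)) = p ⟨2*m-1, by omega⟩ := hidx _ _ _ _ (by simp)
    rw [ea, eb] at h
    have hcast : ((m - 1 : ℕ) : ℝ) = (m : ℝ) - 1 := by
      have h1m : 1 ≤ m := by omega
      push_cast [h1m]
      ring
    rw [nsmul_eq_mul, hcast] at h
    exact h
  have h1' : q < p ⟨0, by omega⟩ - p ⟨m-1, by omega⟩ := h1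
  refine ⟨fun hm3 => ?_, fun hm4 => ?_⟩
  · -- m = 3
    subst hm3
    rw [hmak]
    have hc0 := hCle ⟨0, by omega⟩
    have hc1 := hCle ⟨1, by omega⟩
    have hc2 := hCle ⟨2, by omega⟩
    have e00 : p (J1 (⟨0, by omega⟩ : Fin 3)) = p ⟨0, by omega⟩ := hidx _ _ _ _ rfl
    have e01 : p (J2 (⟨0, by omega⟩ : Fin 3)) = p ⟨5, by omega⟩ :=
      hidx (2*3-1-0) 5 (by omega) (by omega) (by omega)
    have e10 : p (J1 (⟨1, by omega⟩ : Fin 3)) = p ⟨1, by omega⟩ := hidx _ _ _ _ rfl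
    have e11 : p (J2 (⟨1, by omega⟩ : Fin 3)) = p ⟨4, by omega⟩ :=
      hidx (2*3-1-1) 4 (by omega) (by omega) (by omega)
    have e20 : p (J1 (⟨2, by omega⟩ : Fin 3)) = p ⟨2, by omega⟩ := hidx _ _ _ _ rfl
    have e21 : p (J2 (⟨2, by omega⟩ : Fin 3)) = p ⟨3, by omega⟩ :=
      hidx (2*3-1-2) 3 (by omega) (by omega) (by omega)
    rw [e00, e01] at hc0
    rw [e10, e11] at hc1
    rw [e20, e21] at hc2
    have hsum3 : (p ⟨0, by omega⟩ + p ⟨5, by omega⟩) + (p ⟨1, by omega⟩ + p ⟨4, by omega⟩)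
        + (p ⟨2, by omega⟩ + p ⟨3, by omega⟩) = S - q := by
      rw [← hSsum, Fin.sum_univ_three (fun t : Fin 3 => p (J1 t) + p (J2 t))]
      have f00 : p (J1 (0 : Fin 3)) = p ⟨0, by omega⟩ := hidx _ _ _ _ rfl
      have f01 : p (J2 (0 : Fin 3)) = p ⟨5, by omega⟩ :=
        hidx (2*3-1-0) 5 (by omega) (by omega) (by omega)
      have f10 : p (J1 (1 : Fin 3)) = p ⟨1, by omega⟩ := hidx _ _ _ _ rfl
      have f11 : p (J2 (1 : Fin 3)) = p ⟨4, by omega⟩ :=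
        hidx (2*3-1-1) 4 (by omega) (by omega) (by omega)
      have f20 : p (J1 (2 : Fin 3)) = p ⟨2, by omega⟩ := hidx _ _ _ _ rfl
      have f21 : p (J2 (2 : Fin 3)) = p ⟨3, by omega⟩ :=
        hidx (2*3-1-2) 3 (by omega) (by omega) (by omega)
      rw [f00, f01, f10, f11, f20, f21]
    have hs32 : p ⟨3, by omega⟩ ≤ p ⟨2, by omega⟩ :=
      hsort ⟨2, by omega⟩ ⟨3, by omega⟩ (by simp only [Fin.mk_le_mk]; omega)
    have hq5 : q ≤ p ⟨5, by omega⟩ :=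
      hsort ⟨5, by omega⟩ jN (by simp only [hjN, Fin.mk_le_mk]; omega)
    have h1x : q < p ⟨0, by omega⟩ - p ⟨2, by omega⟩ := by
      have h := h1'
      rw [show p (⟨3-1, by omega⟩ : Fin (2*3+1)) = p ⟨2, by omega⟩ from
        hidx _ _ _ _ (by omega)] at h
      exact h
    have hSM3 : S ≤ 3 * M := by
      have h := hSM
      norm_num at h
      linarith
    linarith [hc0, hc1, hc2, hsum3, hs32, hq5, h1x, hSM3]
  · -- 4 ≤ m
    rw [hmak]
    have hm4' : (4:ℝ) ≤ (m:ℝ) := by exact_mod_cast hm4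
    have hden : (0:ℝ) < 2*(m:ℝ)-1 := by linarith
    have p1 : (0:ℝ) ≤ (2*(m:ℝ)-7) * (p ⟨2*m-2, by omega⟩ - p ⟨2*m-1, by omega⟩) :=
      mul_nonneg (by linarith) (by linarith [he])
    have p2 : (0:ℝ) ≤ (4*(m:ℝ)-8) * (p ⟨2*m-1, by omega⟩ - q) :=
      mul_nonneg (by linarith) (by linarith [hqe1])
    have p3 : (0:ℝ) ≤ (2*(m:ℝ)-7) * (M - (p ⟨2*m-2, by omega⟩ + p ⟨2*m-1, by omega⟩ + q)) :=
      mul_nonneg (by linarith) (by linarith [htripleM])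
    have key : 3*(2*(m:ℝ)-1)*(C+q) ≤ (8*(m:ℝ)-7)*M := by
      linarith [p1, p2, p3, hpart, hSM, hCb, hb, h1']
    have hne1 : (2*(m:ℝ)-1) ≠ 0 := by linarith
    have hsc : (4/3 - 1/(2*(m:ℝ)-1)) = (8*(m:ℝ)-7)/(3*(2*(m:ℝ)-1)) := by
      field_simp
      ring
    rw [hsc, div_mul_eq_mul_div, le_div_iff₀ (by linarith)]
    linarith [key]
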